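/- Let γ_1, …, γ_m ∈ ℝ^n, k_r⁺ > 0 and k_r⁻ ≥ 0 for r = 1,…,m, and let Λ₊ = {λ ∈ ℝ^m : λ_r ≥ 0 for all r and ∑_r λ_r γ_r = 0}. Call a nonzero μ ∈ Λ₊ a directional vector of an extreme ray if whenever μ = λ¹ + λ² with λ¹, λ² ∈ Λ₊, both λ¹ and λ² are nonnegative scalar multiples of μ. Then the structural condition (k_r⁻ > 0 for every r with λ_r > 0) and the algebraic condition (∏_{r : λ_r>0} (k_r⁺)^{λ_r} = ∏_{r : λ_r>0} (k_r⁻)^{λ_r}) hold for every λ ∈ Λ₊ if and only if they hold for every directional vector μ of an extreme ray of Λ₊. -/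

import Mathlib

lemma edb_log_iff {m : ℕ} (kp km lam : Fin m → ℝ) (hkp : ∀ r, 0 < kp r)
    (hnn : ∀ r, 0 ≤ lam r) (hst : ∀ r, 0 < lam r → 0 < km r) :
    (∏ r ∈ Finset.univ.filter (fun r => 0 < lam r), kp r ^ lam r
      = ∏ r ∈ Finset.univ.filter (fun r => 0 < lam r), km r ^ lam r)
    ↔ ∑ r, lam r * (Real.log (kp r) - Real.log (km r)) = 0 := by
  set S := Finset.univ.filter (fun r => 0 < lam r) with hS
  have hPp : (0:ℝ) < ∏ r ∈ S, kp r ^ lam r :=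
    Finset.prod_pos fun r _ => Real.rpow_pos_of_pos (hkp r) _
  have hPm : (0:ℝ) < ∏ r ∈ S, km r ^ lam r := by
    refine Finset.prod_pos fun r hr => Real.rpow_pos_of_pos ?_ _
    exact hst r (by simpa [hS] using hr)
  have hlogp : Real.log (∏ r ∈ S, kp r ^ lam r) = ∑ r ∈ S, lam r * Real.log (kp r) := by
    rw [Real.log_prod fun r hr => (Real.rpow_pos_of_pos (hkp r) _).ne']
    exact Finset.sum_congr rfl fun r hr => Real.log_rpow (hkp r) _
  have hlogm : Real.log (∏ r ∈ S, km r ^ lam r) = ∑ r ∈ S, lam r * Real.log (km r) := by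
    rw [Real.log_prod fun r hr =>
      (Real.rpow_pos_of_pos (hst r (by simpa [hS] using hr)) _).ne']
    exact Finset.sum_congr rfl fun r hr =>
      Real.log_rpow (hst r (by simpa [hS] using hr)) _
  have hsum : ∑ r, lam r * (Real.log (kp r) - Real.log (km r))
      = ∑ r ∈ S, lam r * Real.log (kp r) - ∑ r ∈ S, lam r * Real.log (km r) := by
    rw [← Finset.sum_sub_distrib]
    rw [← Finset.sum_subset (Finset.subset_univ S)]
    · exact Finset.sum_congr rfl fun r _ => by ring
    · intro r _ hr
      have : lam r = 0 := le_antisymm (by simpa [hS] using hr) (hnn r)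
      simp [this]
  constructor
  · intro h
    rw [hsum, ← hlogp, ← hlogm, h, sub_self]
  · intro h
    have : Real.log (∏ r ∈ S, kp r ^ lam r) = Real.log (∏ r ∈ S, km r ^ lam r) := by
      rw [hlogp, hlogm]
      have := hsum ▸ h
      linarith [this]
    calc (∏ r ∈ S, kp r ^ lam r) = Real.exp (Real.log (∏ r ∈ S, kp r ^ lam r)) :=
          (Real.exp_log hPp).symm
      _ = Real.exp (Real.log (∏ r ∈ S, km r ^ lam r)) := by rw [this]
      _ = _ := Real.exp_log hPm


lemma edb_induction {n m : ℕ} (γ : Fin m → Fin n → ℝ) (km f : Fin m → ℝ)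
    (hex : ∀ μ : Fin m → ℝ, (∀ r, 0 ≤ μ r) → (∀ i, ∑ r, μ r * γ r i = 0) → μ ≠ 0 →
      (∀ l1 l2 : Fin m → ℝ,
        (∀ r, 0 ≤ l1 r) → (∀ i, ∑ r, l1 r * γ r i = 0) →
        (∀ r, 0 ≤ l2 r) → (∀ i, ∑ r, l2 r * γ r i = 0) →
        μ = l1 + l2 →
        (∃ c : ℝ, 0 ≤ c ∧ l1 = c • μ) ∧ (∃ c : ℝ, 0 ≤ c ∧ l2 = c • μ)) →
      ((∀ r, 0 < μ r → 0 < km r) ∧ ∑ r, μ r * f r = 0)) :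
    ∀ lam : Fin m → ℝ, (∀ r, 0 ≤ lam r) → (∀ i, ∑ r, lam r * γ r i = 0) →
      ((∀ r, 0 < lam r → 0 < km r) ∧ ∑ r, lam r * f r = 0) := by
  suffices H : ∀ N : ℕ, ∀ lam : Fin m → ℝ,
      (Finset.univ.filter (fun r => 0 < lam r)).card = N →
      (∀ r, 0 ≤ lam r) → (∀ i, ∑ r, lam r * γ r i = 0) →
      ((∀ r, 0 < lam r → 0 < km r) ∧ ∑ r, lam r * f r = 0) by
    intro lam hnn hcyc
    exact H _ lam rfl hnn hcyc
  intro N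
  induction N using Nat.strong_induction_on with
  | _ N ih =>
  intro lam hcard hnn hcyc
  by_cases hz : ∀ r, lam r = 0
  · constructor
    · intro r hr; exact absurd (hz r) (ne_of_gt hr)
    · exact Finset.sum_eq_zero fun r _ => by simp [hz r]
  -- lam ≠ 0
  push_neg at hz
  obtain ⟨r0, hr0⟩ := hz
  have hr0pos : 0 < lam r0 := lt_of_le_of_ne (hnn r0) (Ne.symm hr0)
  have hs : 0 < ∑ r, lam r :=
    Finset.sum_pos' (fun r _ => hnn r) ⟨r0, Finset.mem_univ r0, hr0pos⟩
  -- the compact convex slice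
  set K : Set (Fin m → ℝ) := {x | (∀ r, 0 ≤ x r) ∧ (∀ i, ∑ r, x r * γ r i = 0) ∧
      (∑ r, x r = 1) ∧ (∀ r, lam r = 0 → x r = 0)} with hK
  have hKne : K.Nonempty := by
    refine ⟨(∑ r, lam r)⁻¹ • lam, fun r => ?_, fun i => ?_, ?_, fun r hr => by
      simp [hr]⟩
    · simp only [Pi.smul_apply, smul_eq_mul]
      exact mul_nonneg (inv_nonneg.mpr hs.le) (hnn r)
    · simp only [Pi.smul_apply, smul_eq_mul]
      rw [show ∑ r, (∑ r', lam r')⁻¹ * lam r * γ r i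
            = (∑ r', lam r')⁻¹ * ∑ r, lam r * γ r i by
          rw [Finset.mul_sum]; exact Finset.sum_congr rfl fun r _ => by ring]
      rw [hcyc i, mul_zero]
    · simp only [Pi.smul_apply, smul_eq_mul]
      rw [← Finset.mul_sum, inv_mul_cancel₀ hs.ne']
  have hKclosed : IsClosed K := by
    have h1 : IsClosed {x : Fin m → ℝ | ∀ r, 0 ≤ x r} := by
      rw [Set.setOf_forall]
      exact isClosed_iInter fun r => isClosed_le continuous_const (continuous_apply r)
    have h2 : IsClosed {x : Fin m → ℝ | ∀ i, ∑ r, x r * γ r i = 0} := by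
      rw [Set.setOf_forall]
      exact isClosed_iInter fun i => isClosed_eq
        (continuous_finset_sum _ fun r _ => (continuous_apply r).mul continuous_const)
        continuous_const
    have h3 : IsClosed {x : Fin m → ℝ | ∑ r, x r = 1} :=
      isClosed_eq (continuous_finset_sum _ fun r _ => continuous_apply r) continuous_const
    have h4 : IsClosed {x : Fin m → ℝ | ∀ r, lam r = 0 → x r = 0} := by
      rw [Set.setOf_forall]
      refine isClosed_iInter fun r => ?_
      by_cases h : lam r = 0
      · have : {x : Fin m → ℝ | lam r = 0 → x r = 0} = {x | x r = 0} := by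
          ext x; simp [h]
        rw [this]
        exact isClosed_eq (continuous_apply r) continuous_const
      · have : {x : Fin m → ℝ | lam r = 0 → x r = 0} = Set.univ := by
          ext x; simp [h]
        rw [this]; exact isClosed_univ
    have : K = {x : Fin m → ℝ | ∀ r, 0 ≤ x r} ∩ {x | ∀ i, ∑ r, x r * γ r i = 0}
        ∩ {x | ∑ r, x r = 1} ∩ {x | ∀ r, lam r = 0 → x r = 0} := by
      ext x
      simp only [hK, Set.mem_setOf_eq, Set.mem_inter_iff]
      tauto
    rw [this]
    exact ((h1.inter h2).inter h3).inter h4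
  have hKcompact : IsCompact K := by
    refine IsCompact.of_isClosed_subset (isCompact_Icc (a := (0 : Fin m → ℝ)) (b := 1))
      hKclosed ?_
    rintro x ⟨hx1, _, hx3, _⟩
    constructor
    · intro r; exact hx1 r
    · intro r
      calc x r ≤ ∑ r', x r' := Finset.single_le_sum (fun r' _ => hx1 r') (Finset.mem_univ r)
        _ = 1 := hx3
  obtain ⟨e, heK, hextreme⟩ := hKcompact.extremePoints_nonempty hKne
  obtain ⟨he1, he2, he3, he4⟩ := heK
  have hene : e ≠ 0 := by
    intro h; rw [h] at he3; simp at he3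
  -- e is a directional vector of an extreme ray (global sense)
  have hray : ∀ l1 l2 : Fin m → ℝ,
      (∀ r, 0 ≤ l1 r) → (∀ i, ∑ r, l1 r * γ r i = 0) →
      (∀ r, 0 ≤ l2 r) → (∀ i, ∑ r, l2 r * γ r i = 0) →
      e = l1 + l2 →
      (∃ c : ℝ, 0 ≤ c ∧ l1 = c • e) ∧ (∃ c : ℝ, 0 ≤ c ∧ l2 = c • e) := by
    intro l1 l2 h1n h1c h2n h2c hsum
    have hsupp : ∀ r, e r = 0 → l1 r = 0 ∧ l2 r = 0 := by
      intro r hr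
      have : l1 r + l2 r = 0 := by
        have := congrFun hsum r; simp at this; linarith
      constructor <;> linarith [h1n r, h2n r]
    have hsum12 : (∑ r, l1 r) + (∑ r, l2 r) = 1 := by
      rw [← Finset.sum_add_distrib, ← he3]
      exact Finset.sum_congr rfl fun r _ => (congrFun hsum r).symm
    by_cases hs1 : ∑ r, l1 r = 0
    · have hl1 : l1 = 0 := funext fun r =>
        (Finset.sum_eq_zero_iff_of_nonneg (fun r _ => h1n r)).mp hs1 r (Finset.mem_univ r)
      have hl2 : l2 = e := by
        funext r; have := congrFun hsum r; simp [hl1] at this ⊢; simp [this]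
      exact ⟨⟨0, le_refl 0, by simp [hl1]⟩, ⟨1, zero_le_one, by simp [hl2]⟩⟩
    by_cases hs2 : ∑ r, l2 r = 0
    · have hl2 : l2 = 0 := funext fun r =>
        (Finset.sum_eq_zero_iff_of_nonneg (fun r _ => h2n r)).mp hs2 r (Finset.mem_univ r)
      have hl1 : l1 = e := by
        funext r; have := congrFun hsum r; simp [hl2] at this ⊢; simp [this]
      exact ⟨⟨1, zero_le_one, by simp [hl1]⟩, ⟨0, le_refl 0, by simp [hl2]⟩⟩
    have hs1pos : 0 < ∑ r, l1 r :=
      lt_of_le_of_ne (Finset.sum_nonneg fun r _ => h1n r) (Ne.symm hs1)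
    have hs2pos : 0 < ∑ r, l2 r :=
      lt_of_le_of_ne (Finset.sum_nonneg fun r _ => h2n r) (Ne.symm hs2)
    set s1 := ∑ r, l1 r
    set s2 := ∑ r, l2 r
    have hy1K : s1⁻¹ • l1 ∈ K := by
      refine ⟨fun r => by
        simp only [Pi.smul_apply, smul_eq_mul]
        exact mul_nonneg (inv_nonneg.mpr hs1pos.le) (h1n r), fun i => ?_, ?_, fun r hr => ?_⟩
      · simp only [Pi.smul_apply, smul_eq_mul]
        rw [show ∑ r, s1⁻¹ * l1 r * γ r i = s1⁻¹ * ∑ r, l1 r * γ r i by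
          rw [Finset.mul_sum]; exact Finset.sum_congr rfl fun r _ => by ring]
        rw [h1c i, mul_zero]
      · simp only [Pi.smul_apply, smul_eq_mul]
        rw [← Finset.mul_sum, inv_mul_cancel₀ hs1pos.ne']
      · have : e r = 0 := he4 r hr
        have := (hsupp r this).1
        simp [this]
    have hy2K : s2⁻¹ • l2 ∈ K := by
      refine ⟨fun r => by
        simp only [Pi.smul_apply, smul_eq_mul]
        exact mul_nonneg (inv_nonneg.mpr hs2pos.le) (h2n r), fun i => ?_, ?_, fun r hr => ?_⟩
      · simp only [Pi.smul_apply, smul_eq_mul]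
        rw [show ∑ r, s2⁻¹ * l2 r * γ r i = s2⁻¹ * ∑ r, l2 r * γ r i by
          rw [Finset.mul_sum]; exact Finset.sum_congr rfl fun r _ => by ring]
        rw [h2c i, mul_zero]
      · simp only [Pi.smul_apply, smul_eq_mul]
        rw [← Finset.mul_sum, inv_mul_cancel₀ hs2pos.ne']
      · have : e r = 0 := he4 r hr
        have := (hsupp r this).2
        simp [this]
    have hmem : e ∈ openSegment ℝ (s1⁻¹ • l1) (s2⁻¹ • l2) := by
      refine ⟨s1, s2, hs1pos, hs2pos, hsum12, ?_⟩
      rw [smul_smul, smul_smul, mul_inv_cancel₀ hs1pos.ne', mul_inv_cancel₀ hs2pos.ne',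
        one_smul, one_smul]
      exact hsum.symm
    obtain ⟨hy1, hy2⟩ := ((mem_extremePoints (𝕜 := ℝ) (A := K) (x := e)).mp ⟨⟨he1, he2, he3, he4⟩, hextreme⟩).2 _ hy1K _ hy2K hmem
    constructor
    · refine ⟨s1, hs1pos.le, ?_⟩
      rw [← hy1, smul_smul, mul_inv_cancel₀ hs1pos.ne', one_smul]
    · refine ⟨s2, hs2pos.le, ?_⟩
      rw [← hy2, smul_smul, mul_inv_cancel₀ hs2pos.ne', one_smul]
  obtain ⟨hestr, hesum⟩ := hex e he1 he2 hene hray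
  -- minimum ratio
  have hSene : (Finset.univ.filter (fun r => 0 < e r)).Nonempty := by
    by_contra h
    rw [Finset.not_nonempty_iff_eq_empty] at h
    have : ∀ r, e r = 0 := by
      intro r
      by_contra hr
      have : 0 < e r := lt_of_le_of_ne (he1 r) (Ne.symm hr)
      have : r ∈ Finset.univ.filter (fun r => 0 < e r) := by simp [this]
      simp [h] at this
    exact hene (funext this)
  set Se := Finset.univ.filter (fun r => 0 < e r) with hSe
  have hesupp : ∀ r, 0 < e r → 0 < lam r := by
    intro r hr
    rcases eq_or_lt_of_le (hnn r) with h | h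
    · exact absurd (he4 r h.symm) hr.ne'
    · exact h
  set t := Se.inf' hSene (fun r => lam r / e r) with ht
  have htpos : 0 < t := by
    rw [ht, Finset.lt_inf'_iff]
    intro r hr
    have hre : 0 < e r := by simpa [hSe] using hr
    exact div_pos (hesupp r hre) hre
  set mu := fun r => lam r - t * e r with hmu
  have hmunn : ∀ r, 0 ≤ mu r := by
    intro r
    rcases eq_or_lt_of_le (he1 r) with h | h
    · simp [hmu, ← h]; exact hnn r
    · have hrin : r ∈ Se := by simp [hSe, h]
      have := Finset.inf'_le (fun r => lam r / e r) hrin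
      have : t * e r ≤ lam r := by
        rw [← le_div_iff₀ h]; exact this
      simp [hmu]; linarith
  have hmucyc : ∀ i, ∑ r, mu r * γ r i = 0 := by
    intro i
    have : ∑ r, mu r * γ r i = (∑ r, lam r * γ r i) - t * ∑ r, e r * γ r i := by
      rw [Finset.mul_sum, ← Finset.sum_sub_distrib]
      exact Finset.sum_congr rfl fun r _ => by simp [hmu]; ring
    rw [this, hcyc i, he2 i, mul_zero, sub_zero]
  -- support strictly decreases
  obtain ⟨rm, hrmSe, hrm⟩ := Finset.exists_mem_eq_inf' hSene (fun r => lam r / e r)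
  have hrme : 0 < e rm := by simpa [hSe] using hrmSe
  have hmurm : mu rm = 0 := by
    show lam rm - t * e rm = 0
    rw [ht, hrm, div_mul_cancel₀ _ hrme.ne', sub_self]
  have hsubset : (Finset.univ.filter (fun r => 0 < mu r))
      ⊂ Finset.univ.filter (fun r => 0 < lam r) := by
    constructor
    · intro r hr
      have hrmu : 0 < mu r := by simpa using hr
      have : 0 < lam r := by
        rcases eq_or_lt_of_le (hnn r) with h | h
        · exfalso
          have he0 : e r = 0 := he4 r h.symm
          simp [hmu, ← h, he0] at hrmu
        · exact h
      simp [this]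
    · intro hsub
      have h1 : rm ∈ Finset.univ.filter (fun r => 0 < lam r) := by
        simp [hesupp rm hrme]
      have h2 := hsub h1
      simp [hmurm] at h2
  have hcardlt : (Finset.univ.filter (fun r => 0 < mu r)).card < N := by
    rw [← hcard]
    exact Finset.card_lt_card hsubset
  obtain ⟨hmustr, hmusum⟩ := ih _ hcardlt mu rfl hmunn hmucyc
  constructor
  · intro r hr
    rcases eq_or_lt_of_le (hmunn r) with h | h
    · have hmu0 : lam r - t * e r = 0 := h.symm
      have hlam : lam r = t * e r := by linarith
      have hre : 0 < e r := by
        rcases eq_or_lt_of_le (he1 r) with h2 | h2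
        · exfalso; rw [← h2, mul_zero] at hlam; exact hr.ne' hlam
        · exact h2
      exact hestr r hre
    · exact hmustr r h
  · have : ∑ r, lam r * f r = (∑ r, mu r * f r) + t * ∑ r, e r * f r := by
      rw [Finset.mul_sum, ← Finset.sum_add_distrib]
      exact Finset.sum_congr rfl fun r _ => by simp [hmu]; ring
    rw [this, hmusum, hesum, mul_zero, add_zero]

/-- The extended form of detailed balance (structural + algebraic conditions
for all oriented cycles in the cone `Λ₊`) holds iff it holds for the
directional vectors of the extreme rays of `Λ₊`. -/
theorem extended_detailed_balance_iff_extreme_rays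
    (n m : ℕ) (γ : Fin m → Fin n → ℝ) (kp km : Fin m → ℝ)
    (hkp : ∀ r, 0 < kp r) (hkm : ∀ r, 0 ≤ km r) :
    (∀ lam : Fin m → ℝ, (∀ r, 0 ≤ lam r) → (∀ i, ∑ r, lam r * γ r i = 0) →
        ((∀ r, 0 < lam r → 0 < km r) ∧
          ∏ r ∈ Finset.univ.filter (fun r => 0 < lam r), kp r ^ lam r
            = ∏ r ∈ Finset.univ.filter (fun r => 0 < lam r), km r ^ lam r)) ↔
      (∀ μ : Fin m → ℝ, (∀ r, 0 ≤ μ r) → (∀ i, ∑ r, μ r * γ r i = 0) → μ ≠ 0 →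
        (∀ l1 l2 : Fin m → ℝ,
          (∀ r, 0 ≤ l1 r) → (∀ i, ∑ r, l1 r * γ r i = 0) →
          (∀ r, 0 ≤ l2 r) → (∀ i, ∑ r, l2 r * γ r i = 0) →
          μ = l1 + l2 →
          (∃ c : ℝ, 0 ≤ c ∧ l1 = c • μ) ∧ (∃ c : ℝ, 0 ≤ c ∧ l2 = c • μ)) →
        ((∀ r, 0 < μ r → 0 < km r) ∧
          ∏ r ∈ Finset.univ.filter (fun r => 0 < μ r), kp r ^ μ r
            = ∏ r ∈ Finset.univ.filter (fun r => 0 < μ r), km r ^ μ r)) := by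
  constructor
  · intro h μ hnn hcyc _ _
    exact h μ hnn hcyc
  · intro h
    set f : Fin m → ℝ := fun r => Real.log (kp r) - Real.log (km r) with hf
    have hex : ∀ μ : Fin m → ℝ, (∀ r, 0 ≤ μ r) → (∀ i, ∑ r, μ r * γ r i = 0) → μ ≠ 0 →
        (∀ l1 l2 : Fin m → ℝ,
          (∀ r, 0 ≤ l1 r) → (∀ i, ∑ r, l1 r * γ r i = 0) →
          (∀ r, 0 ≤ l2 r) → (∀ i, ∑ r, l2 r * γ r i = 0) →
          μ = l1 + l2 →
          (∃ c : ℝ, 0 ≤ c ∧ l1 = c • μ) ∧ (∃ c : ℝ, 0 ≤ c ∧ l2 = c • μ)) →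
        ((∀ r, 0 < μ r → 0 < km r) ∧ ∑ r, μ r * f r = 0) := by
      intro μ hnn hcyc hne hrays
      obtain ⟨hstr, halg⟩ := h μ hnn hcyc hne hrays
      exact ⟨hstr, (edb_log_iff kp km μ hkp hnn hstr).mp halg⟩
    intro lam hnn hcyc
    obtain ⟨hstr, hsum⟩ := edb_induction γ km f hex lam hnn hcyc
    exact ⟨hstr, (edb_log_iff kp km lam hkp hnn hstr).mpr hsum⟩
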